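/- Let β > 0 and γ > 0, and consider the harmonic energy P_harm(W) = (β/2)‖ĀW‖₂² on L²(ℝ). Then the supremum of P_harm over the ball B_γ = {W : (1/2)‖W‖₂² ≤ γ} equals βγ; it also equals the supremum of P_harm over S_γ (the even, unimodal, nonnegative functions in B_γ); and this supremum is not attained by any W ∈ B_γ. -/

import Mathlib

open MeasureTheory Real Filter

/-- Averaging operator `(Ā W)(φ) = ∫_{φ-1/2}^{φ+1/2} W(ψ) dψ`. -/
noncomputable def avg (W : ℝ → ℝ) (φ : ℝ) : ℝ := ∫ ψ in (φ - 1/2)..(φ + 1/2), W ψ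

/-- `Φ'`, the derivative of the potential, taken within the relevant interval. -/
noncomputable def Phi' (Φ : ℝ → ℝ) (γ : ℝ) : ℝ → ℝ :=
  fun r => derivWithin Φ (Set.Icc (-Real.sqrt (2*γ)) (Real.sqrt (2*γ))) r

/-- `Φ''`, the second derivative of the potential, taken within the relevant interval. -/
noncomputable def Phi'' (Φ : ℝ → ℝ) (γ : ℝ) : ℝ → ℝ :=
  fun r => iteratedDerivWithin 2 Φ (Set.Icc (-Real.sqrt (2*γ)) (Real.sqrt (2*γ))) r

/-- Standing assumptions on the potential `Φ` for parameter `γ`: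
`Φ` is `C²` on `[-√(2γ), √(2γ)]`, convex there (`Φ'' ≥ 0`), normalised
(`Φ(0) = Φ'(0) = 0`), and does not vanish identically on this interval. -/
def StandingAssumptions (Φ : ℝ → ℝ) (γ : ℝ) : Prop :=
  ContDiffOn ℝ 2 Φ (Set.Icc (-Real.sqrt (2*γ)) (Real.sqrt (2*γ))) ∧
  (∀ r ∈ Set.Icc (-Real.sqrt (2*γ)) (Real.sqrt (2*γ)), 0 ≤ Phi'' Φ γ r) ∧
  Φ 0 = 0 ∧ Phi' Φ γ 0 = 0 ∧
  ∃ r ∈ Set.Icc (-Real.sqrt (2*γ)) (Real.sqrt (2*γ)), Φ r ≠ 0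

/-- `β = Φ''(0)`. -/
noncomputable def betaOf (Φ : ℝ → ℝ) (γ : ℝ) : ℝ := Phi'' Φ γ 0

/-- Potential energy functional `P(W) = ∫_ℝ Φ((ĀW)(φ)) dφ`. -/
noncomputable def PE (Φ : ℝ → ℝ) (W : ℝ → ℝ) : ℝ := ∫ φ : ℝ, Φ (avg W φ)

/-- Gâteaux derivative `∂P(W) = Ā(Φ' ∘ (ĀW))`. -/
noncomputable def dPE (Φ : ℝ → ℝ) (γ : ℝ) (W : ℝ → ℝ) : ℝ → ℝ :=
  avg (fun ψ => Phi' Φ γ (avg W ψ))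

/-- Membership in the ball `B_γ = {W ∈ L²(ℝ) : (1/2)‖W‖₂² ≤ γ}`. -/
def memB (γ : ℝ) (W : ℝ → ℝ) : Prop :=
  MemLp W 2 volume ∧ (∫ φ : ℝ, (W φ)^2) ≤ 2*γ

/-- `W` is (a.e.) even and unimodal. -/
def EvenUnimodal (W : ℝ → ℝ) : Prop :=
  (∀ᵐ φ ∂(volume : Measure ℝ), W (-φ) = W φ) ∧
  (∀ᵐ p ∂(volume : Measure (ℝ × ℝ)), 0 ≤ p.1 → p.1 ≤ p.2 → W p.2 ≤ W p.1)

/-- Membership in `S_γ`: even, unimodal, a.e. nonnegative functions in `B_γ`. -/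
def memS (γ : ℝ) (W : ℝ → ℝ) : Prop :=
  memB γ W ∧ EvenUnimodal W ∧ (∀ᵐ φ ∂(volume : Measure ℝ), 0 ≤ W φ)


noncomputable def Vwin (W : ℝ → ℝ) (φ : ℝ) : ℝ := ∫ ψ in (φ - 1/2)..(φ + 1/2), (W ψ)^2

section aux
variable {W : ℝ → ℝ}

lemma ii_of_memL2 (hW : MemLp W 2 volume) (a b : ℝ) : IntervalIntegrable W volume a b :=
  intervalIntegrable_iff.2
    (((hW.locallyIntegrable one_le_two).integrableOn_isCompact isCompact_uIcc).mono_set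
      Set.uIoc_subset_uIcc)

lemma continuous_win {F : ℝ → ℝ} (h : ∀ a b, IntervalIntegrable F volume a b) :
    Continuous (fun φ => ∫ ψ in (φ - 1/2)..(φ + 1/2), F ψ) := by
  have h1 : Continuous fun x : ℝ => ∫ t in (0:ℝ)..x, F t :=
    intervalIntegral.continuous_primitive h 0
  have heq : (fun φ => ∫ ψ in (φ - 1/2)..(φ + 1/2), F ψ)
      = fun φ => (∫ t in (0:ℝ)..(φ + 1/2), F t) - ∫ t in (0:ℝ)..(φ - 1/2), F t := by
    funext φ
    rw [intervalIntegral.integral_interval_sub_left (h 0 (φ + 1/2)) (h 0 (φ - 1/2))]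
  rw [heq]
  exact (h1.comp (continuous_id.add continuous_const)).sub
    (h1.comp (continuous_id.sub continuous_const))

lemma continuous_avg (hW : MemLp W 2 volume) : Continuous (avg W) :=
  continuous_win (ii_of_memL2 hW)

lemma continuous_Vwin (hW : MemLp W 2 volume) : Continuous (Vwin W) :=
  continuous_win (fun _ _ => hW.integrable_sq.intervalIntegrable)

lemma variance_id (hW : MemLp W 2 volume) (φ : ℝ) :
    (∫ ψ in (φ - 1/2)..(φ + 1/2), (W ψ - avg W φ)^2) = Vwin W φ - (avg W φ)^2 := by
  set m := avg W φ with hm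
  have h1 := ii_of_memL2 hW (φ - 1/2) (φ + 1/2)
  have h2 : IntervalIntegrable (fun x => W x ^ 2) volume (φ - 1/2) (φ + 1/2) :=
    hW.integrable_sq.intervalIntegrable
  have e : ∀ ψ, (W ψ - m)^2 = W ψ ^ 2 - (2 * m * W ψ - m ^ 2) := by intro ψ; ring
  simp only [e]
  rw [intervalIntegral.integral_sub h2 (((h1.const_mul (2*m)).sub
      (intervalIntegrable_const))),
    intervalIntegral.integral_sub (h1.const_mul (2*m)) intervalIntegrable_const,
    intervalIntegral.integral_const_mul, intervalIntegral.integral_const]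
  have h3 : φ + 1/2 - (φ - 1/2) = 1 := by ring
  rw [h3]
  simp only [one_smul, smul_eq_mul]
  show _ - (2 * m * avg W φ - 1 * m^2) = _
  rw [← hm]
  unfold Vwin
  ring

lemma avg_sq_le_Vwin (hW : MemLp W 2 volume) (φ : ℝ) : (avg W φ)^2 ≤ Vwin W φ := by
  have h := variance_id hW φ
  have h0 : (0:ℝ) ≤ ∫ ψ in (φ - 1/2)..(φ + 1/2), (W ψ - avg W φ)^2 :=
    intervalIntegral.integral_nonneg (by linarith) (fun x _ => sq_nonneg _)
  linarith

lemma const_on_window (hW : MemLp W 2 volume) (φ : ℝ) (h0 : Vwin W φ - (avg W φ)^2 = 0) :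
    ∀ᵐ ψ ∂(volume.restrict (Set.Ioc (φ - 1/2) (φ + 1/2))), W ψ = avg W φ := by
  set m := avg W φ with hm
  set I := Set.Ioc (φ - 1/2) (φ + 1/2) with hI
  have hint : Integrable (fun ψ => (W ψ - m)^2) (volume.restrict I) := by
    have : MemLp (fun ψ => W ψ - m) 2 (volume.restrict I) :=
      (hW.restrict I).sub (memLp_const m)
    exact this.integrable_sq
  have hz : (∫ ψ in I, (W ψ - m)^2) = 0 := by
    have hv := variance_id hW φ
    rw [intervalIntegral.integral_of_le (by linarith : φ - 1/2 ≤ φ + 1/2)] at hv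
    rw [← hI] at hv
    rw [hv, ← hm, h0]
  have hae := (integral_eq_zero_iff_of_nonneg (fun ψ => sq_nonneg (W ψ - m)) hint).1 hz
  filter_upwards [hae] with ψ hψ
  have h1 : (W ψ - m)^2 = 0 := hψ
  have h2 := pow_eq_zero_iff (n := 2) (by norm_num) |>.1 h1
  linarith

lemma lintegral_Vwin (hW : MemLp W 2 volume) (hWm : Measurable W) :
    ∫⁻ φ, ENNReal.ofReal (Vwin W φ) = ∫⁻ ψ, ENNReal.ofReal ((W ψ)^2) := by
  set g : ℝ → ENNReal := fun ψ => ENNReal.ofReal ((W ψ)^2) with hg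
  have hgm : Measurable g := (hWm.pow_const 2).ennreal_ofReal
  set s : Set (ℝ × ℝ) := {p : ℝ × ℝ | p.1 - 1/2 < p.2 ∧ p.2 ≤ p.1 + 1/2} with hs
  have hsm : MeasurableSet s := by
    apply MeasurableSet.inter
    · exact measurableSet_lt (measurable_fst.sub measurable_const) measurable_snd
    · exact measurableSet_le measurable_snd (measurable_fst.add measurable_const)
  set h : ℝ × ℝ → ENNReal := s.indicator (fun p => g p.2) with hh
  have hhm : Measurable h := (hgm.comp measurable_snd).indicator hsm
  have step1 : ∀ φ : ℝ, ENNReal.ofReal (Vwin W φ) = ∫⁻ ψ, h (φ, ψ) := by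
    intro φ
    have hIoc : Vwin W φ = ∫ ψ in Set.Ioc (φ - 1/2) (φ + 1/2), (W ψ)^2 := by
      rw [Vwin, intervalIntegral.integral_of_le (by linarith)]
    have hint : IntegrableOn (fun ψ => (W ψ)^2) (Set.Ioc (φ - 1/2) (φ + 1/2)) volume :=
      hW.integrable_sq.integrableOn
    rw [hIoc, ofReal_integral_eq_lintegral_ofReal hint
      (ae_of_all _ fun x => sq_nonneg _)]
    have he : ∀ ψ, h (φ, ψ) = (Set.Ioc (φ - 1/2) (φ + 1/2)).indicator g ψ := by
      intro ψ
      simp only [hh, Set.indicator_apply, hs, Set.mem_setOf_eq, Set.mem_Ioc]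
    simp only [he]
    rw [lintegral_indicator measurableSet_Ioc]
  have step2 : ∀ ψ : ℝ, (∫⁻ φ, h (φ, ψ)) = g ψ := by
    intro ψ
    have he : ∀ φ, h (φ, ψ) = (Set.Ico (ψ - 1/2) (ψ + 1/2)).indicator (fun _ => g ψ) φ := by
      intro φ
      simp only [hh, Set.indicator_apply, hs, Set.mem_setOf_eq, Set.mem_Ico]
      congr 1
      simp only [eq_iff_iff]
      constructor
      · rintro ⟨h1, h2⟩; exact ⟨by linarith, by linarith⟩
      · rintro ⟨h1, h2⟩; exact ⟨by linarith, by linarith⟩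
    simp only [he]
    rw [lintegral_indicator measurableSet_Ico, setLIntegral_const, Real.volume_Ico]
    have h1 : ψ + 1/2 - (ψ - 1/2) = 1 := by ring
    rw [h1]
    simp
  calc ∫⁻ φ, ENNReal.ofReal (Vwin W φ) = ∫⁻ φ, ∫⁻ ψ, h (φ, ψ) := by
        simp only [step1]
    _ = ∫⁻ ψ, ∫⁻ φ, h (φ, ψ) := lintegral_lintegral_swap hhm.aemeasurable
    _ = ∫⁻ ψ, g ψ := by simp only [step2]

/-- The key strictness lemma (for measurable `W`). -/
lemma strict_main {γ : ℝ} (hW : MemLp W 2 volume) (hWm : Measurable W)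
    (hγ : 0 < γ) (hle : (∫ φ, (W φ)^2) ≤ 2*γ) :
    Integrable (fun φ => (avg W φ)^2) volume ∧ (∫ φ, (avg W φ)^2) < 2*γ := by
  set f : ℝ → ℝ := fun φ => (avg W φ)^2 with hf
  have hfc : Continuous f := (continuous_avg hW).pow 2
  have hfnn : ∀ φ, 0 ≤ f φ := fun φ => sq_nonneg _
  have hVc : Continuous (Vwin W) := continuous_Vwin hW
  set Lf := ∫⁻ φ, ENNReal.ofReal (f φ) with hLf
  set LV := ∫⁻ φ, ENNReal.ofReal (Vwin W φ) with hLVdef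
  have hW2nn : (0:ℝ) ≤ ∫ ψ, (W ψ)^2 := integral_nonneg (fun ψ => sq_nonneg _)
  have hLV : LV = ENNReal.ofReal (∫ ψ, (W ψ)^2) := by
    rw [hLVdef, lintegral_Vwin hW hWm,
      ← ofReal_integral_eq_lintegral_ofReal hW.integrable_sq (ae_of_all _ fun x => sq_nonneg _)]
  have hmono : Lf ≤ LV :=
    lintegral_mono fun φ => ENNReal.ofReal_le_ofReal (avg_sq_le_Vwin hW φ)
  have hLVtop : LV ≠ ⊤ := by rw [hLV]; exact ENNReal.ofReal_ne_top
  have hLftop : Lf ≠ ⊤ := fun h => hLVtop (top_le_iff.1 (h ▸ hmono))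
  have hfint : Integrable f volume := by
    refine ⟨hfc.aestronglyMeasurable, ?_⟩
    rw [hasFiniteIntegral_iff_ofReal (ae_of_all _ hfnn)]
    exact lt_top_iff_ne_top.2 hLftop
  refine ⟨hfint, ?_⟩
  have hint_eq : ∫ φ, f φ = Lf.toReal := by
    rw [integral_eq_lintegral_of_nonneg_ae (ae_of_all _ hfnn) hfc.aestronglyMeasurable]
  rcases lt_or_eq_of_le hmono with hlt | heq
  · -- strict lintegral inequality
    have h1 : Lf.toReal < LV.toReal := (ENNReal.toReal_lt_toReal hLftop hLVtop).2 hlt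
    rw [hLV, ENNReal.toReal_ofReal hW2nn] at h1
    rw [hint_eq]
    linarith
  · -- equality case: W is a.e. constant
    have hDnn : ∀ φ, 0 ≤ Vwin W φ - f φ := fun φ => sub_nonneg.2 (avg_sq_le_Vwin hW φ)
    have hD0 : ∀ φ, Vwin W φ - f φ = 0 := by
      have hsplit : ∀ φ, ENNReal.ofReal (Vwin W φ)
          = ENNReal.ofReal (f φ) + ENNReal.ofReal (Vwin W φ - f φ) := by
        intro φ
        rw [← ENNReal.ofReal_add (hfnn φ) (hDnn φ)]
        congr 1
        ring
      have hsum : LV = Lf + ∫⁻ φ, ENNReal.ofReal (Vwin W φ - f φ) := by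
        rw [hLVdef]
        simp only [hsplit]
        rw [lintegral_add_left (hfc.measurable.ennreal_ofReal)]
      have hzero : (∫⁻ φ, ENNReal.ofReal (Vwin W φ - f φ)) = 0 := by
        have : Lf + ∫⁻ φ, ENNReal.ofReal (Vwin W φ - f φ) = Lf + 0 := by
          rw [add_zero, ← hsum, heq]
        exact (ENNReal.add_right_inj hLftop).1 this
      have hae : (fun φ => ENNReal.ofReal (Vwin W φ - f φ)) =ᵐ[volume] 0 :=
        (lintegral_eq_zero_iff ((hVc.sub hfc).measurable.ennreal_ofReal)).1 hzero
      have haeD : (fun φ => Vwin W φ - f φ) =ᵐ[volume] (fun _ => (0:ℝ)) := by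
        filter_upwards [hae] with φ hφ
        have : ENNReal.ofReal (Vwin W φ - f φ) = 0 := hφ
        have h2 := ENNReal.ofReal_eq_zero.1 this
        have := hDnn φ
        linarith
      have := (Continuous.ae_eq_iff_eq volume (hVc.sub hfc) continuous_const).1 haeD
      intro φ
      exact congrFun this φ
    have const_win : ∀ φ : ℝ,
        ∀ᵐ ψ ∂(volume.restrict (Set.Ioc (φ - 1/2) (φ + 1/2))), W ψ = avg W φ :=
      fun φ => const_on_window hW φ (hD0 φ)
    -- overlapping windows give equal averages
    have near : ∀ x y : ℝ, x ≤ y → y - x < 1 → avg W x = avg W y := by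
      intro x y hxy hlt1
      set J := Set.Ioc (y - 1/2) (x + 1/2) with hJ
      have hJ1 : J ⊆ Set.Ioc (x - 1/2) (x + 1/2) := Set.Ioc_subset_Ioc (by linarith) le_rfl
      have hJ2 : J ⊆ Set.Ioc (y - 1/2) (y + 1/2) := Set.Ioc_subset_Ioc le_rfl (by linarith)
      have h1 := ae_restrict_of_ae_restrict_of_subset hJ1 (const_win x)
      have h2 := ae_restrict_of_ae_restrict_of_subset hJ2 (const_win y)
      by_contra hne
      have hFalse : ∀ᵐ ψ ∂(volume.restrict J), False := by
        filter_upwards [h1, h2] with ψ e1 e2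
        exact hne (e1 ▸ e2 ▸ rfl)
      have h0 : volume.restrict J Set.univ = 0 := by
        simpa [ae_iff] using hFalse
      rw [Measure.restrict_apply_univ, hJ, Real.volume_Ioc] at h0
      have := ENNReal.ofReal_eq_zero.1 h0
      linarith
    have near' : ∀ x y : ℝ, |x - y| < 1 → avg W x = avg W y := by
      intro x y h
      rcases le_total x y with hxy | hxy
      · refine near x y hxy ?_
        have : y - x ≤ |x - y| := by rw [abs_sub_comm]; exact le_abs_self _
        linarith
      · refine (near y x hxy ?_).symm
        have : x - y ≤ |x - y| := le_abs_self _
        linarith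
    have halfstep : ∀ n : ℕ, ∀ x y : ℝ, |x - y| ≤ n / 2 → avg W x = avg W y := by
      intro n
      induction n with
      | zero =>
        intro x y h
        have h0 : |x - y| = 0 := le_antisymm (by simpa using h) (abs_nonneg _)
        have : x = y := by
          have := abs_eq_zero.1 h0
          linarith [sub_eq_zero.1 this]
        rw [this]
      | succ n ih =>
        intro x y h
        have hn1 : (0:ℝ) < (n:ℝ) + 1 := by positivity
        set z := x + ((n:ℝ)/((n:ℝ)+1)) * (y - x) with hz
        have hcast : ((n+1 : ℕ) : ℝ) = (n:ℝ) + 1 := by push_cast; ring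
        rw [hcast] at h
        have h1 : |x - z| ≤ (n:ℝ)/2 := by
          have he : x - z = -((n:ℝ)/((n:ℝ)+1)) * (y - x) := by rw [hz]; ring
          rw [he, abs_mul, abs_neg, abs_of_nonneg (by positivity : (0:ℝ) ≤ (n:ℝ)/((n:ℝ)+1))]
          have hyx : |y - x| ≤ ((n:ℝ)+1)/2 := by rw [abs_sub_comm]; exact h
          calc (n:ℝ)/((n:ℝ)+1) * |y - x| ≤ (n:ℝ)/((n:ℝ)+1) * (((n:ℝ)+1)/2) := by
                apply mul_le_mul_of_nonneg_left hyx (by positivity)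
            _ = (n:ℝ)/2 := by field_simp
        have h2 : |z - y| < 1 := by
          have he : z - y = (x - y) / ((n:ℝ)+1) := by
            rw [hz]; field_simp; ring
          rw [he, abs_div, abs_of_pos hn1]
          rw [div_lt_one hn1]
          calc |x - y| ≤ ((n:ℝ)+1)/2 := h
            _ < (n:ℝ)+1 := by linarith
        rw [ih x z h1]
        exact near' z y h2
    have constm : ∀ x : ℝ, avg W x = avg W 0 := by
      intro x
      refine halfstep ⌈2*|x|⌉₊ x 0 ?_
      have h1 : 2*|x| ≤ (⌈2*|x|⌉₊ : ℝ) := Nat.le_ceil _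
      rw [sub_zero]
      linarith
    set a := avg W 0 with ha
    have cover : ∀ᵐ ψ : ℝ, W ψ = a := by
      have hnull : ∀ k : ℤ, volume ({ψ : ℝ | W ψ ≠ a}
          ∩ Set.Ioc ((k:ℝ) - 1/2) ((k:ℝ) + 1/2)) = 0 := by
        intro k
        have h1 : ∀ᵐ ψ ∂(volume.restrict (Set.Ioc ((k:ℝ)-1/2) ((k:ℝ)+1/2))), W ψ = a := by
          have := const_win (k:ℝ)
          rwa [constm (k:ℝ)] at this
        have h2 := (ae_restrict_iff' measurableSet_Ioc).1 h1
        rw [ae_iff] at h2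
        refine measure_mono_null ?_ h2
        rintro ψ ⟨hne, hmem⟩
        simp only [Set.mem_setOf_eq, Classical.not_imp]
        exact ⟨hmem, hne⟩
      rw [ae_iff]
      refine measure_mono_null ?_
        (measure_iUnion_null (s := fun k : ℤ => {ψ : ℝ | W ψ ≠ a}
          ∩ Set.Ioc ((k:ℝ) - 1/2) ((k:ℝ) + 1/2)) hnull)
      intro ψ hψ
      refine Set.mem_iUnion.2 ⟨⌈ψ - 1/2⌉, hψ, ?_, ?_⟩
      · have := Int.ceil_lt_add_one (ψ - 1/2); linarith
      · have := Int.le_ceil (ψ - 1/2); linarith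
    by_cases hA : a = 0
    · -- W = 0 a.e., so ∫ f = 0
      have hW20 : ∫ ψ, (W ψ)^2 = 0 := by
        rw [integral_congr_ae (g := fun _ => (0:ℝ))]
        · simp
        · filter_upwards [cover] with ψ hψ; rw [hψ, hA]; ring
      have : Lf ≤ ENNReal.ofReal 0 := by
        rw [← hW20, ← hLV]; exact hmono
      have hLf0 : Lf = 0 := le_antisymm (by simpa using this) zero_le
      rw [hint_eq, hLf0]
      simp only [ENNReal.toReal_zero]
      positivity
    · -- a ≠ 0: contradiction with finiteness of ∫ W²
      exfalso
      have ha2 : 0 < a^2 := by positivity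
      set T := (2*γ+1)/a^2 with hT
      have hTpos : 0 < T := by positivity
      have hsub : ∫ ψ in Set.Ioc (0:ℝ) T, (W ψ)^2 ≤ ∫ ψ, (W ψ)^2 :=
        setIntegral_le_integral hW.integrable_sq (ae_of_all _ fun x => sq_nonneg _)
      have hval : ∫ ψ in Set.Ioc (0:ℝ) T, (W ψ)^2 = T * a^2 := by
        rw [setIntegral_congr_ae measurableSet_Ioc
          (g := fun _ => a^2) (by filter_upwards [cover] with ψ hψ _; rw [hψ])]
        rw [setIntegral_const, measureReal_def, Real.volume_Ioc, sub_zero, ENNReal.toReal_ofReal hTpos.le,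
          smul_eq_mul]
      have hTa : T * a^2 = 2*γ+1 := by rw [hT]; field_simp
      rw [hval, hTa] at hsub
      linarith

lemma avg_congr_ae {W W' : ℝ → ℝ} (h : W =ᵐ[volume] W') : avg W = avg W' := by
  funext φ
  exact intervalIntegral.integral_congr_ae (by filter_upwards [h] with x hx _; exact hx)

lemma strict_of_memB {W : ℝ → ℝ} {γ : ℝ} (hγ : 0 < γ) (hB : memB γ W) :
    Integrable (fun φ => (avg W φ)^2) volume ∧ (∫ φ, (avg W φ)^2) < 2*γ := by
  obtain ⟨hW, hle⟩ := hB
  set W' := hW.aestronglyMeasurable.mk W with hW'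
  have hae : W =ᵐ[volume] W' := hW.aestronglyMeasurable.ae_eq_mk
  have hW'm : Measurable W' := hW.aestronglyMeasurable.stronglyMeasurable_mk.measurable
  have hW'L2 : MemLp W' 2 volume := hW.ae_eq hae
  have hint : (∫ φ, (W' φ)^2) = ∫ φ, (W φ)^2 :=
    integral_congr_ae (by filter_upwards [hae] with x hx; rw [hx])
  have havg : avg W = avg W' := avg_congr_ae hae
  have := strict_main hW'L2 hW'm hγ (hint ▸ hle)
  rw [havg]
  exact this

lemma witness (γ : ℝ) (hγ : 0 < γ) (n : ℕ) (hn : 1 ≤ n) :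
    ∃ W : ℝ → ℝ, memS γ W ∧ 2*γ - γ/n ≤ ∫ φ, (avg W φ)^2 := by
  have hnR : (1:ℝ) ≤ (n:ℝ) := by exact_mod_cast hn
  have hnpos : (0:ℝ) < n := by linarith
  set c := Real.sqrt (γ / n) with hc
  have hcnn : 0 ≤ c := Real.sqrt_nonneg _
  have hc2 : c^2 = γ / n := Real.sq_sqrt (by positivity)
  set I : Set ℝ := Set.Icc (-(n:ℝ)) n with hI
  set Wn : ℝ → ℝ := I.indicator (fun _ => c) with hWn
  have hIvol : volume I = ENNReal.ofReal (2*n) := by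
    rw [hI, Real.volume_Icc]; congr 1; ring
  have hL2 : MemLp Wn 2 volume := by
    refine memLp_indicator_const 2 measurableSet_Icc c (Or.inr ?_)
    rw [hIvol]; exact ENNReal.ofReal_ne_top
  have hsq : ∀ x, (Wn x)^2 = I.indicator (fun _ => c^2) x := by
    intro x
    by_cases h : x ∈ I
    · rw [hWn]; simp [Set.indicator_of_mem h]
    · rw [hWn]; simp [Set.indicator_of_notMem h]
  have hWint : (∫ φ, (Wn φ)^2) = 2*γ := by
    simp only [hsq]
    rw [integral_indicator measurableSet_Icc, setIntegral_const, measureReal_def, ← hI, hIvol,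
      ENNReal.toReal_ofReal (by positivity), smul_eq_mul, hc2]
    field_simp
  have hmemB : memB γ Wn := ⟨hL2, le_of_eq hWint⟩
  have hmemS : memS γ Wn := by
    refine ⟨hmemB, ⟨?_, ?_⟩, ?_⟩
    · refine ae_of_all _ fun φ => ?_
      have : -φ ∈ I ↔ φ ∈ I := by
        rw [hI]; simp only [Set.mem_Icc]; constructor <;> (intro h; constructor <;> linarith [h.1, h.2])
      by_cases h : φ ∈ I
      · rw [hWn, Set.indicator_of_mem (this.2 h), Set.indicator_of_mem h]
      · rw [hWn, Set.indicator_of_notMem (fun hh => h (this.1 hh)), Set.indicator_of_notMem h]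
    · refine ae_of_all _ fun p h0 h12 => ?_
      by_cases h : p.2 ∈ I
      · have h1 : p.1 ∈ I := by
          rw [hI] at h ⊢; simp only [Set.mem_Icc] at h ⊢
          constructor <;> linarith [h.1, h.2]
        rw [hWn, Set.indicator_of_mem h, Set.indicator_of_mem h1]
      · rw [hWn, Set.indicator_of_notMem h]
        exact Set.indicator_nonneg (fun _ _ => hcnn) _
    · exact ae_of_all _ fun φ => Set.indicator_nonneg (fun _ _ => hcnn) _
  refine ⟨Wn, hmemS, ?_⟩
  have hfint : Integrable (fun φ => (avg Wn φ)^2) volume := (strict_of_memB hγ hmemB).1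
  set s : Set ℝ := Set.Icc (-(n:ℝ) + 1/2) ((n:ℝ) - 1/2) with hs
  have havgc : ∀ φ ∈ s, avg Wn φ = c := by
    intro φ hφ
    rw [hs, Set.mem_Icc] at hφ
    have heq : avg Wn φ = ∫ ψ in (φ - 1/2)..(φ + 1/2), c := by
      refine intervalIntegral.integral_congr fun ψ hψ => ?_
      rw [Set.uIcc_of_le (by linarith), Set.mem_Icc] at hψ
      have : ψ ∈ I := by
        rw [hI, Set.mem_Icc]; constructor <;> linarith [hψ.1, hψ.2, hφ.1, hφ.2]
      rw [hWn, Set.indicator_of_mem this]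
    rw [heq, intervalIntegral.integral_const]
    have : φ + 1/2 - (φ - 1/2) = 1 := by ring
    rw [this, one_smul]
  have hlow : ∫ φ in s, (avg Wn φ)^2 ≤ ∫ φ, (avg Wn φ)^2 :=
    setIntegral_le_integral hfint (ae_of_all _ fun φ => sq_nonneg _)
  have hsval : (∫ φ in s, (avg Wn φ)^2) = 2*γ - γ/n := by
    rw [setIntegral_congr_fun measurableSet_Icc
      (g := fun _ => c^2) (fun φ hφ => by rw [havgc φ hφ])]
    rw [setIntegral_const, measureReal_def, Real.volume_Icc, smul_eq_mul]
    have h1 : (n:ℝ) - 1/2 - (-(n:ℝ) + 1/2) = 2*n - 1 := by ring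
    rw [h1, ENNReal.toReal_ofReal (by linarith), hc2]
    field_simp
  linarith

end aux


/-- for `β, γ > 0`, the supremum of the harmonic energy
`P_harm(W) = (β/2)‖ĀW‖₂²` over `B_γ` equals `βγ`, it also equals the supremum over
`S_γ`, and it is not attained in `B_γ`. -/

theorem statement14 (β γ : ℝ) (hβ : 0 < β) (hγ : 0 < γ) :
    IsLUB ((fun W => β/2 * ∫ φ : ℝ, (avg W φ)^2) '' {W | memB γ W}) (β*γ) ∧
    IsLUB ((fun W => β/2 * ∫ φ : ℝ, (avg W φ)^2) '' {W | memS γ W}) (β*γ) ∧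
    (∀ W, memB γ W → (β/2 * ∫ φ : ℝ, (avg W φ)^2) < β*γ) := by
  have hstrict : ∀ W, memB γ W → (β/2 * ∫ φ : ℝ, (avg W φ)^2) < β*γ := by
    intro W hB
    have h := (strict_of_memB hγ hB).2
    have h2 : β/2 * (∫ φ, (avg W φ)^2) < β/2 * (2*γ) :=
      mul_lt_mul_of_pos_left h (by positivity)
    calc β/2 * ∫ φ, (avg W φ)^2 < β/2 * (2*γ) := h2
      _ = β*γ := by ring
  have hSB : {W : ℝ → ℝ | memS γ W} ⊆ {W | memB γ W} := fun W h => h.1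
  have hubB : (β*γ) ∈ upperBounds ((fun W => β/2 * ∫ φ : ℝ, (avg W φ)^2) '' {W | memB γ W}) := by
    rintro v ⟨W, hW, rfl⟩
    exact (hstrict W hW).le
  have hubS : (β*γ) ∈ upperBounds ((fun W => β/2 * ∫ φ : ℝ, (avg W φ)^2) '' {W | memS γ W}) :=
    upperBounds_mono_set (Set.image_mono hSB) hubB
  have hlstS : ∀ b ∈ upperBounds ((fun W => β/2 * ∫ φ : ℝ, (avg W φ)^2) '' {W | memS γ W}),
      β*γ ≤ b := by
    intro b hb
    have hseq : ∀ n : ℕ, 1 ≤ n → β*γ - (β*γ/2)/n ≤ b := by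
      intro n hn
      obtain ⟨W, hWS, hWval⟩ := witness γ hγ n hn
      have hmem : β/2 * (∫ φ, (avg W φ)^2) ∈
          ((fun W => β/2 * ∫ φ : ℝ, (avg W φ)^2) '' {W | memS γ W}) :=
        ⟨W, hWS, rfl⟩
      have hble := hb hmem
      have h2 : β/2 * (2*γ - γ/n) ≤ β/2 * ∫ φ, (avg W φ)^2 :=
        mul_le_mul_of_nonneg_left hWval (by positivity)
      have h3 : β/2 * (2*γ - γ/(n:ℝ)) = β*γ - (β*γ/2)/(n:ℝ) := by ring
      linarith
    have htend : Tendsto (fun n : ℕ => β*γ - (β*γ/2)/(n:ℝ)) atTop (nhds (β*γ)) := by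
      have h0 : Tendsto (fun n : ℕ => (β*γ/2)/(n:ℝ)) atTop (nhds 0) :=
        tendsto_const_div_atTop_nhds_zero_nat _
      simpa using tendsto_const_nhds.sub h0
    exact le_of_tendsto htend (eventually_atTop.2 ⟨1, fun n hn => hseq n hn⟩)
  have hlstB : ∀ b ∈ upperBounds ((fun W => β/2 * ∫ φ : ℝ, (avg W φ)^2) '' {W | memB γ W}),
      β*γ ≤ b := fun b hb =>
    hlstS b (upperBounds_mono_set (Set.image_mono hSB) hb)
  exact ⟨⟨hubB, fun b hb => hlstB b hb⟩, ⟨hubS, fun b hb => hlstS b hb⟩, hstrict⟩
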